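/- Let n ≥ 0 and w ≥ 0 be integers, take ℓ = 1, and set λ = −w(w+n+4) − n − 2 and μ = (λ−3)(n+2). Define the polynomials h_0(t) = Σ_{j=0}^{w} [(−w)_j (w+n+4)_j / (j! (n+2)_j)] t^j and h_1(t) = −(n+1) · Σ_{j=0}^{w+1} [(−w−1)_j (w+n+3)_j (λ)_j / (j! (n+1)_j (λ−1)_j)] t^j. Then the pair (h_0, h_1) satisfies system (D') with eigenvalue λ and system (E') with eigenvalue μ for all t ∈ (0,1). -/

import Mathlib

open Finset Polynomial

namespace Stmt14Aux

noncomputable section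

def aa (n w j : ℕ) : ℝ :=
  ((ascPochhammer ℝ j).eval (-(w : ℝ)) * (ascPochhammer ℝ j).eval ((w : ℝ) + n + 4))
    / ((j.factorial : ℝ) * (ascPochhammer ℝ j).eval ((n : ℝ) + 2))

def bb (n w : ℕ) (lam : ℝ) (j : ℕ) : ℝ :=
  ((ascPochhammer ℝ j).eval (-(w : ℝ) - 1) * (ascPochhammer ℝ j).eval ((w : ℝ) + n + 3)
      * (ascPochhammer ℝ j).eval lam)
    / ((j.factorial : ℝ) * (ascPochhammer ℝ j).eval ((n : ℝ) + 1)
      * (ascPochhammer ℝ j).eval (lam - 1))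

def Bc (n w : ℕ) (lam : ℝ) (j : ℕ) : ℝ := -((n:ℝ)+1) * bb n w lam j

def ff (w : ℕ) (c : ℕ → ℝ) (t : ℝ) : ℝ := ∑ j ∈ Finset.range (w+4), c j * t ^ j

def Dc (c : ℕ → ℝ) (j : ℕ) : ℝ := ((j : ℝ) + 1) * c (j+1)

def Uc (c : ℕ → ℝ) : ℕ → ℝ
  | 0 => 0
  | (k+1) => c k

lemma pe_succ_left (m : ℕ) (x : ℝ) :
    (ascPochhammer ℝ (m+1)).eval x = x * (ascPochhammer ℝ m).eval (x + 1) := by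
  rw [ascPochhammer_succ_left]
  simp [eval_comp]

lemma pe_ne_zero_of_neg (m : ℕ) (x : ℝ) (h : x + m ≤ 0) :
    (ascPochhammer ℝ m).eval x ≠ 0 := by
  induction m with
  | zero => simp
  | succ k ih =>
    rw [ascPochhammer_succ_eval]
    push_cast at h ⊢
    have hk : x + k ≤ 0 := by linarith
    exact mul_ne_zero (ih (by linarith)) (by nlinarith)

lemma pe_neg_nat_zero (w j : ℕ) (h : w < j) : (ascPochhammer ℝ j).eval (-(w : ℝ)) = 0 := by
  induction j with
  | zero => omega
  | succ k ih =>
    rw [ascPochhammer_succ_eval]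
    rcases Nat.lt_or_ge w k with hk | hk
    · rw [ih hk, zero_mul]
    · have : w = k := by omega
      subst this
      simp

lemma aa_vanish (n w j : ℕ) (h : w + 1 ≤ j) : aa n w j = 0 := by
  rw [aa, pe_neg_nat_zero w j (by omega)]
  simp

lemma bb_vanish (n w : ℕ) (lam : ℝ) (j : ℕ) (h : w + 2 ≤ j) : bb n w lam j = 0 := by
  have : -(w : ℝ) - 1 = -((w+1 : ℕ) : ℝ) := by push_cast; ring
  rw [bb, this, pe_neg_nat_zero (w+1) j (by omega)]
  simp

lemma Bc_vanish (n w : ℕ) (lam : ℝ) (j : ℕ) (h : w + 2 ≤ j) : Bc n w lam j = 0 := by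
  rw [Bc, bb_vanish n w lam j h, mul_zero]

lemma aa_zero (n w : ℕ) : aa n w 0 = 1 := by simp [aa]

lemma bb_zero (n w : ℕ) (lam : ℝ) : bb n w lam 0 = 1 := by simp [bb]

lemma CI1 (n w j : ℕ) :
    ((j : ℝ) + 1) * ((j : ℝ) + n + 2) * aa n w (j+1)
      = ((j : ℝ) - w) * ((j : ℝ) + w + n + 4) * aa n w j := by
  have hC := (ascPochhammer_pos j ((n : ℝ) + 2) (by positivity)).ne'
  rw [aa, aa, ascPochhammer_succ_eval, ascPochhammer_succ_eval, ascPochhammer_succ_eval,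
    Nat.factorial_succ]
  push_cast
  field_simp
  ring

lemma CI2 (n w : ℕ) (lam : ℝ) (hlam : lam = -(w : ℝ) * ((w : ℝ) + n + 4) - n - 2) (j : ℕ) :
    ((n : ℝ) + 1) * bb n w lam (j+1)
      = ((n : ℝ) + j + 2) * (aa n w (j+1) - aa n w j) := by
  rcases Nat.lt_or_ge w j with hw | hw
  · rw [bb_vanish n w lam (j+1) (by omega), aa_vanish n w (j+1) (by omega),
      aa_vanish n w j (by omega)]
    ring
  · have hC := (ascPochhammer_pos j ((n : ℝ) + 2) (by positivity)).ne'
    have hL : (ascPochhammer ℝ j).eval lam ≠ 0 := by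
      apply pe_ne_zero_of_neg
      rw [hlam]
      have : (j : ℝ) ≤ w := by exact_mod_cast hw
      nlinarith [sq_nonneg ((w : ℝ))]
    have hlam1 : lam - 1 ≠ 0 := by
      rw [hlam]; nlinarith [sq_nonneg ((w : ℝ))]
    rw [aa, aa, bb, pe_succ_left j (-(w:ℝ) - 1), pe_succ_left j ((w:ℝ) + n + 3),
      pe_succ_left j ((n:ℝ) + 1), pe_succ_left j (lam - 1), ascPochhammer_succ_eval,
      ascPochhammer_succ_eval, ascPochhammer_succ_eval, ascPochhammer_succ_eval,
      Nat.factorial_succ]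
    have e1 : -(w:ℝ) - 1 + 1 = -(w:ℝ) := by ring
    have e2 : (w:ℝ) + n + 3 + 1 = (w:ℝ) + n + 4 := by ring
    have e3 : (n:ℝ) + 1 + 1 = (n:ℝ) + 2 := by ring
    have e4 : lam - 1 + 1 = lam := by ring
    rw [e1, e2, e3, e4]
    push_cast
    field_simp
    rw [hlam]
    ring

lemma CI3 (n w : ℕ) (lam : ℝ) (hlam : lam = -(w : ℝ) * ((w : ℝ) + n + 4) - n - 2) (j : ℕ) :
    ((n : ℝ) + 1) * ((j : ℝ) + 1) * bb n w lam (j+1)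
      = (lam + j) * aa n w j := by
  have h2 := CI2 n w lam hlam j
  have h1 := CI1 n w j
  rw [hlam] at *
  linear_combination ((j:ℝ)+1) * h2 + h1

lemma CI3' (n w : ℕ) (lam : ℝ) (hlam : lam = -(w : ℝ) * ((w : ℝ) + n + 4) - n - 2) (j : ℕ) :
    ((j : ℝ) + 1) * Bc n w lam (j+1) = -(lam + j) * aa n w j := by
  rw [Bc]
  linear_combination -(CI3 n w lam hlam j)

lemma Umul (w : ℕ) (c : ℕ → ℝ) (hc : c (w+3) = 0) (t : ℝ) :
    t * ff w c t = ff w (Uc c) t := by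
  have L : t * ff w c t = ∑ j ∈ Finset.range (w+3), c j * t^(j+1) := by
    rw [ff, Finset.mul_sum, Finset.sum_range_succ, hc]
    rw [zero_mul, mul_zero, add_zero]
    exact Finset.sum_congr rfl fun j _ => by ring
  have R : ff w (Uc c) t = ∑ j ∈ Finset.range (w+3), c j * t^(j+1) := by
    rw [ff, Finset.sum_range_succ']
    simp [Uc]
  rw [L, R]

lemma hasDerivAt_ff (w : ℕ) (c : ℕ → ℝ) (hc : c (w+4) = 0) (t : ℝ) :
    HasDerivAt (ff w c) (ff w (Dc c) t) t := by
  have H : HasDerivAt (fun t : ℝ => ∑ j ∈ Finset.range (w+4), c j * t ^ j)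
      (∑ j ∈ Finset.range (w+4), c j * ((j : ℝ) * t ^ (j-1))) t :=
    HasDerivAt.fun_sum fun j _ => (hasDerivAt_pow j t).const_mul (c j)
  have R : ∑ j ∈ Finset.range (w+4), c j * ((j : ℝ) * t ^ (j-1))
      = ∑ j ∈ Finset.range (w+3), c (j+1) * (((j:ℝ)+1) * t^j) := by
    rw [Finset.sum_range_succ']
    push_cast
    simp
  have L : ff w (Dc c) t = ∑ j ∈ Finset.range (w+3), c (j+1) * (((j:ℝ)+1) * t^j) := by
    have h0 : Dc c (w+3) = 0 := by rw [Dc, hc, mul_zero]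
    rw [ff, Finset.sum_range_succ, h0, zero_mul, add_zero]
    exact Finset.sum_congr rfl fun j _ => by rw [Dc]; ring
  rw [L, ← R]
  exact H

lemma derivEq (w : ℕ) (c : ℕ → ℝ) (hc : c (w+4) = 0) :
    deriv (ff w c) = ff w (Dc c) :=
  funext fun t => (hasDerivAt_ff w c hc t).deriv

variable (n w : ℕ) (lam : ℝ)

lemma F1 (hlam : lam = -(w : ℝ) * ((w : ℝ) + n + 4) - n - 2) (t : ℝ) :
    t*(1-t) * ff w (Dc (Dc (aa n w))) t + (((n:ℝ)+2) - ((n:ℝ)+5)*t) * ff w (Dc (aa n w)) t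
      + (-lam-(n:ℝ)-2) * ff w (aa n w) t = 0 := by
  have v3 : Dc (Dc (aa n w)) (w+3) = 0 := by
    simp [Dc, aa_vanish n w (w+5) (by omega)]
  have e1 := Umul w (Dc (Dc (aa n w))) v3 t
  have v4 : Uc (Dc (Dc (aa n w))) (w+3) = 0 := by
    show Dc (Dc (aa n w)) (w+2) = 0
    simp [Dc, aa_vanish n w (w+4) (by omega)]
  have e2 := Umul w (Uc (Dc (Dc (aa n w)))) v4 t
  have v5 : Dc (aa n w) (w+3) = 0 := by
    simp [Dc, aa_vanish n w (w+4) (by omega)]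
  have e3 := Umul w (Dc (aa n w)) v5 t
  have key : ff w (Uc (Dc (Dc (aa n w)))) t - ff w (Uc (Uc (Dc (Dc (aa n w))))) t
      + ((n:ℝ)+2) * ff w (Dc (aa n w)) t - ((n:ℝ)+5) * ff w (Uc (Dc (aa n w))) t
      + (-lam-(n:ℝ)-2) * ff w (aa n w) t = 0 := by
    simp only [ff, Finset.mul_sum, ← Finset.sum_sub_distrib, ← Finset.sum_add_distrib]
    refine Finset.sum_eq_zero fun j _ => ?_
    match j with
    | 0 =>
      simp only [Uc, Dc]
      have h := CI1 n w 0
      push_cast at h ⊢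
      linear_combination h - aa n w 0 * hlam
    | 1 =>
      simp only [Uc, Dc]
      have h := CI1 n w 1
      push_cast at h ⊢
      linear_combination t * h - t * aa n w 1 * hlam
    | (m+2) =>
      simp only [Uc, Dc]
      have h := CI1 n w (m+2)
      push_cast at h ⊢
      linear_combination t^(m+2) * h - t^(m+2) * aa n w (m+2) * hlam
  linear_combination key + (1-t) * e1 - e2 - ((n:ℝ)+5) * e3

lemma F2 (hlam : lam = -(w : ℝ) * ((w : ℝ) + n + 4) - n - 2) (t : ℝ) :
    ff w (Bc n w lam) t
      = (((n:ℝ)+2)*t - ((n:ℝ)+1)) * ff w (aa n w) t - t*(1-t) * ff w (Dc (aa n w)) t := by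
  have va : aa n w (w+3) = 0 := aa_vanish n w (w+3) (by omega)
  have e1 := Umul w (aa n w) va t
  have v5 : Dc (aa n w) (w+3) = 0 := by
    simp [Dc, aa_vanish n w (w+4) (by omega)]
  have e2 := Umul w (Dc (aa n w)) v5 t
  have v6 : Uc (Dc (aa n w)) (w+3) = 0 := by
    show Dc (aa n w) (w+2) = 0
    simp [Dc, aa_vanish n w (w+3) (by omega)]
  have e3 := Umul w (Uc (Dc (aa n w))) v6 t
  have key : ff w (Bc n w lam) t - ((n:ℝ)+2) * ff w (Uc (aa n w)) t
      + ((n:ℝ)+1) * ff w (aa n w) t + ff w (Uc (Dc (aa n w))) t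
      - ff w (Uc (Uc (Dc (aa n w)))) t = 0 := by
    simp only [ff, Finset.mul_sum, ← Finset.sum_sub_distrib, ← Finset.sum_add_distrib]
    refine Finset.sum_eq_zero fun j _ => ?_
    match j with
    | 0 =>
      simp only [Uc, Dc, Bc]
      rw [aa_zero, bb_zero]
      ring
    | 1 =>
      simp only [Uc, Dc, Bc]
      have h := CI2 n w lam hlam 0
      push_cast at h ⊢
      linear_combination -t * h
    | (m+2) =>
      simp only [Uc, Dc, Bc]
      have h := CI2 n w lam hlam (m+1)
      push_cast at h ⊢
      linear_combination -t^(m+2) * h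
  linear_combination key - ((n:ℝ)+2) * e1 + (1-t) * e2 - e3

lemma F3 (hlam : lam = -(w : ℝ) * ((w : ℝ) + n + 4) - n - 2) (t : ℝ) :
    ff w (Dc (Bc n w lam)) t = -lam * ff w (aa n w) t - t * ff w (Dc (aa n w)) t := by
  have v5 : Dc (aa n w) (w+3) = 0 := by
    simp [Dc, aa_vanish n w (w+4) (by omega)]
  have e1 := Umul w (Dc (aa n w)) v5 t
  have key : ff w (Dc (Bc n w lam)) t + lam * ff w (aa n w) t
      + ff w (Uc (Dc (aa n w))) t = 0 := by
    simp only [ff, Finset.mul_sum, ← Finset.sum_sub_distrib, ← Finset.sum_add_distrib]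
    refine Finset.sum_eq_zero fun j _ => ?_
    match j with
    | 0 =>
      simp only [Uc, Dc]
      have h := CI3' n w lam hlam 0
      push_cast at h ⊢
      linear_combination h
    | (m+1) =>
      simp only [Uc, Dc]
      have h := CI3' n w lam hlam (m+1)
      push_cast at h ⊢
      linear_combination t^(m+1) * h
  linear_combination key + e1

lemma F4 (hlam : lam = -(w : ℝ) * ((w : ℝ) + n + 4) - n - 2) (t : ℝ) :
    ff w (Dc (Dc (Bc n w lam))) t
      = -(lam+1) * ff w (Dc (aa n w)) t - t * ff w (Dc (Dc (aa n w))) t := by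
  have v3 : Dc (Dc (aa n w)) (w+3) = 0 := by
    simp [Dc, aa_vanish n w (w+5) (by omega)]
  have e1 := Umul w (Dc (Dc (aa n w))) v3 t
  have key : ff w (Dc (Dc (Bc n w lam))) t + (lam+1) * ff w (Dc (aa n w)) t
      + ff w (Uc (Dc (Dc (aa n w)))) t = 0 := by
    simp only [ff, Finset.mul_sum, ← Finset.sum_sub_distrib, ← Finset.sum_add_distrib]
    refine Finset.sum_eq_zero fun j _ => ?_
    match j with
    | 0 =>
      simp only [Uc, Dc]
      have h := CI3' n w lam hlam 1
      push_cast at h ⊢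
      linear_combination h
    | (m+1) =>
      simp only [Uc, Dc]
      have h := CI3' n w lam hlam (m+2)
      push_cast at h ⊢
      linear_combination (((m:ℝ)+2) * t^(m+1)) * h
  linear_combination key + e1


end

end Stmt14Aux


open Stmt14Aux

/-- Case `ℓ = 1`, `k = 1`, `n ≥ 0`: with `λ = −w(w+n+4) − n − 2` and `μ = (λ−3)(n+2)`,
the pair `h₀(t) = ₂F₁(−w, w+n+4; n+2; t)` and
`h₁(t) = −(n+1) · ₃F₂(−w−1, w+n+3, λ; n+1, λ−1; t)`
satisfies system (D′) with eigenvalue `λ` and system (E′) with eigenvalue `μ` on `(0,1)`. -/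
theorem stmt14 (n w : ℕ) (lam mu : ℝ)
    (hlam : lam = -(w : ℝ) * ((w : ℝ) + n + 4) - n - 2)
    (hmu : mu = (lam - 3) * ((n : ℝ) + 2))
    (h : ℕ → ℝ → ℝ)
    (h0def : ∀ t : ℝ, h 0 t =
      ∑ j ∈ Finset.range (w + 1),
        ((ascPochhammer ℝ j).eval (-(w : ℝ)) * (ascPochhammer ℝ j).eval ((w : ℝ) + n + 4))
          / ((j.factorial : ℝ) * (ascPochhammer ℝ j).eval ((n : ℝ) + 2)) * t ^ j)
    (h1def : ∀ t : ℝ, h 1 t =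
      -((n : ℝ) + 1) *
        ∑ j ∈ Finset.range (w + 2),
          ((ascPochhammer ℝ j).eval (-(w : ℝ) - 1) * (ascPochhammer ℝ j).eval ((w : ℝ) + n + 3)
              * (ascPochhammer ℝ j).eval lam)
            / ((j.factorial : ℝ) * (ascPochhammer ℝ j).eval ((n : ℝ) + 1)
              * (ascPochhammer ℝ j).eval (lam - 1)) * t ^ j) :
    (∀ i ≤ 1, ∀ t : ℝ, 0 < t → t < 1 →
      t * (1 - t) * deriv (deriv (h i)) t
        - (((n : ℝ) + 1 - i + 3) * t - ((n : ℝ) + 1 - i + 1)) * deriv (h i) t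
        + ((1 : ℝ) - i) * ((i : ℝ) + 1) * (h (i + 1) t - h i t) / (1 - t)
        - (i : ℝ) * ((1 : ℝ) - i + 1) * t * (h i t - h (i - 1) t) / (1 - t)
        = lam * h i t) ∧
    (∀ i ≤ 1, ∀ t : ℝ, 0 < t → t < 1 →
      ((n : ℝ) - 1 + 3 * i) * t * (1 - t) * deriv (deriv (h i)) t
        - 3 * ((i : ℝ) + 1) * ((1 : ℝ) - i) * deriv (h (i + 1)) t
        + ((n : ℝ) - 1 + 3 * i) * (((n : ℝ) + 1 - i + 1) - ((n : ℝ) + 1 - i + 3) * t)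
            * deriv (h i) t
        + 3 * (i : ℝ) * ((1 : ℝ) - i + 1) * t * deriv (h (i - 1)) t
        + ((n : ℝ) + 2 - 3 * i) * ((i : ℝ) + 1) * ((1 : ℝ) - i)
            * (h (i + 1) t - h i t) / (1 - t)
        - ((n : ℝ) + 2 - 3 * i) * (i : ℝ) * ((1 : ℝ) - i + 1)
            * (h i t - h (i - 1) t) / (1 - t)
        - (2 * (n : ℝ) + 1 + 3) * (i : ℝ) * ((1 : ℝ) - i + 1) * (h i t - h (i - 1) t)
        = mu * h i t) := by
  subst hmu
  have hA0 : ∀ t : ℝ, h 0 t = ff w (aa n w) t := by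
    intro t
    rw [h0def t]
    exact Finset.sum_subset (Finset.range_subset_range.mpr (by omega))
      (fun j _ hj => by
        rw [show ((ascPochhammer ℝ j).eval (-(w : ℝ)) * (ascPochhammer ℝ j).eval ((w : ℝ) + n + 4))
          / ((j.factorial : ℝ) * (ascPochhammer ℝ j).eval ((n : ℝ) + 2)) = aa n w j from rfl,
          aa_vanish n w j (by simpa using hj), zero_mul])
  have hB0 : ∀ t : ℝ, h 1 t = ff w (Bc n w lam) t := by
    intro t
    calc h 1 t = ∑ j ∈ Finset.range (w+2), Bc n w lam j * t ^ j := by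
          rw [h1def t, Finset.mul_sum]
          exact Finset.sum_congr rfl fun j _ => by simp only [Bc, bb]; ring
      _ = ff w (Bc n w lam) t :=
          Finset.sum_subset (Finset.range_subset_range.mpr (by omega))
            (fun j _ hj => by rw [Bc_vanish n w lam j (by simpa using hj), zero_mul])
  have hafun : h 0 = ff w (aa n w) := funext hA0
  have hbfun : h 1 = ff w (Bc n w lam) := funext hB0
  have hva : aa n w (w+4) = 0 := aa_vanish n w (w+4) (by omega)
  have hvda : Dc (aa n w) (w+4) = 0 := by simp [Dc, aa_vanish n w (w+5) (by omega)]
  have hvb : Bc n w lam (w+4) = 0 := Bc_vanish n w lam (w+4) (by omega)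
  have hvdb : Dc (Bc n w lam) (w+4) = 0 := by simp [Dc, Bc_vanish n w lam (w+5) (by omega)]
  have hda' : deriv (ff w (aa n w)) = ff w (Dc (aa n w)) := derivEq w _ hva
  have hdda' : deriv (ff w (Dc (aa n w))) = ff w (Dc (Dc (aa n w))) := derivEq w _ hvda
  have hdb' : deriv (ff w (Bc n w lam)) = ff w (Dc (Bc n w lam)) := derivEq w _ hvb
  have hddb' : deriv (ff w (Dc (Bc n w lam))) = ff w (Dc (Dc (Bc n w lam))) := derivEq w _ hvdb
  have hda : deriv (h 0) = ff w (Dc (aa n w)) := by rw [hafun]; exact derivEq w _ hva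
  have hdda : deriv (deriv (h 0)) = ff w (Dc (Dc (aa n w))) := by
    rw [hda]; exact derivEq w _ hvda
  have hdb : deriv (h 1) = ff w (Dc (Bc n w lam)) := by rw [hbfun]; exact derivEq w _ hvb
  have hddb : deriv (deriv (h 1)) = ff w (Dc (Dc (Bc n w lam))) := by
    rw [hdb]; exact derivEq w _ hvdb
  constructor
  · intro i hi t ht0 ht1
    have hne : (1:ℝ) - t ≠ 0 := ne_of_gt (by linarith)
    have f1 := F1 n w lam hlam t
    have f2 := F2 n w lam hlam t
    have f3 := F3 n w lam hlam t
    have f4 := F4 n w lam hlam t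
    interval_cases i
    · simp only [Nat.reduceAdd, Nat.reduceSub, Nat.zero_sub, Nat.cast_zero, Nat.cast_one,
        hdda, hda, hddb, hdb, hafun, hbfun, hda', hdda', hdb', hddb']
      field_simp
      linear_combination (1-t) * f1 + f2
    · simp only [Nat.reduceAdd, Nat.reduceSub, Nat.cast_zero, Nat.cast_one,
        hdda, hda, hddb, hdb, hafun, hbfun, hda', hdda', hdb', hddb']
      field_simp
      linear_combination -t*(1-t)*f1 + (-t - lam*(1-t))*f2
        + (-(((n:ℝ)+3)*t) + ((n:ℝ)+1))*(1-t)*f3 + t*(1-t)^2*f4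
  · intro i hi t ht0 ht1
    have hne : (1:ℝ) - t ≠ 0 := ne_of_gt (by linarith)
    have f1 := F1 n w lam hlam t
    have f2 := F2 n w lam hlam t
    have f3 := F3 n w lam hlam t
    have f4 := F4 n w lam hlam t
    interval_cases i
    · simp only [Nat.reduceAdd, Nat.reduceSub, Nat.zero_sub, Nat.cast_zero, Nat.cast_one,
        hdda, hda, hddb, hdb, hafun, hbfun, hda', hdda', hdb', hddb']
      field_simp
      linear_combination ((n:ℝ)-1)*(1-t)*f1 + ((n:ℝ)+2)*f2 - 3*(1-t)*f3
    · simp only [Nat.reduceAdd, Nat.reduceSub, Nat.cast_zero, Nat.cast_one,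
        hdda, hda, hddb, hdb, hafun, hbfun, hda', hdda', hdb', hddb']
      field_simp
      linear_combination -((n:ℝ)+2)*t*(1-t)*f1
        + (-((n:ℝ)-1) - (2*(n:ℝ)+4)*(1-t) - (lam-3)*((n:ℝ)+2)*(1-t))*f2
        + ((n:ℝ)+2)*(((n:ℝ)+1)-((n:ℝ)+3)*t)*(1-t)*f3 + ((n:ℝ)+2)*t*(1-t)^2*f4
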